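/- Let M̃ = {x ∈ A : ∃ m ∈ M, φ(m) ≠ 0 and m⊗x ∈ M}. Then F̃ is M̃-stable (M̃ ⊆ F̃ and m⊗u ∈ F̃ for m ∈ M̃, u ∈ F̃) and φ̃ is an M̃-form on F̃, i.e. φ̃(m⊗u) = φ̃(m)φ̃(u) for all m ∈ M̃, u ∈ F̃. -/

import Mathlib

/-- F̃ is M̃-stable and φ̃ is an M̃-form on F̃ (multiplicativity expressed via
    admissible witnesses). -/
theorem stmt_3 {K A : Type*} [Field K] [CommRing A] [Algebra K A]
    (M : Subalgebra K A) (F : Submodule K A)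
    (hMF : ∀ m ∈ M, m ∈ F)
    (hstable : ∀ m ∈ M, ∀ u ∈ F, m * u ∈ F)
    (φ : F →ₗ[K] K)
    (hone : φ ⟨1, hMF 1 M.one_mem⟩ = 1)
    (hmul : ∀ (m u : A) (hm : m ∈ M) (hu : u ∈ F),
      φ ⟨m * u, hstable m hm u hu⟩ = φ ⟨m, hMF m hm⟩ * φ ⟨u, hu⟩) :
    -- M̃ ⊆ F̃
    ({x : A | ∃ a, ∃ ha : a ∈ M, φ ⟨a, hMF a ha⟩ ≠ 0 ∧ a * x ∈ M} ⊆
      {x : A | ∃ a, ∃ ha : a ∈ M, φ ⟨a, hMF a ha⟩ ≠ 0 ∧ a * x ∈ F}) ∧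
    -- F̃ is stable under multiplication by elements of M̃
    (∀ m ∈ {x : A | ∃ a, ∃ ha : a ∈ M, φ ⟨a, hMF a ha⟩ ≠ 0 ∧ a * x ∈ M},
      ∀ u ∈ {x : A | ∃ a, ∃ ha : a ∈ M, φ ⟨a, hMF a ha⟩ ≠ 0 ∧ a * x ∈ F},
        m * u ∈ {x : A | ∃ a, ∃ ha : a ∈ M, φ ⟨a, hMF a ha⟩ ≠ 0 ∧ a * x ∈ F}) ∧
    -- φ̃(m ⊗ u) = φ̃(m) φ̃(u)
    (∀ (m u : A)
        (a : A) (ha : a ∈ M) (_ : φ ⟨a, hMF a ha⟩ ≠ 0) (ham : a * m ∈ M)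
        (b : A) (hb : b ∈ M) (_ : φ ⟨b, hMF b hb⟩ ≠ 0) (hbu : b * u ∈ F)
        (c : A) (hc : c ∈ M) (_ : φ ⟨c, hMF c hc⟩ ≠ 0) (hcmu : c * (m * u) ∈ F),
      φ ⟨c * (m * u), hcmu⟩ / φ ⟨c, hMF c hc⟩ =
        (φ ⟨a * m, hMF _ ham⟩ / φ ⟨a, hMF a ha⟩) *
          (φ ⟨b * u, hbu⟩ / φ ⟨b, hMF b hb⟩)) := by
  have hφcong : ∀ (x y : A) (hx : x ∈ F) (hy : y ∈ F), x = y →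
      φ ⟨x, hx⟩ = φ ⟨y, hy⟩ := by
    intro x y hx hy h; subst h; rfl
  refine ⟨?_, ?_, ?_⟩
  · rintro x ⟨a, ha, hφa, haM⟩
    exact ⟨a, ha, hφa, hMF _ haM⟩
  · rintro m ⟨a, ha, hφa, ham⟩ u ⟨b, hb, hφb, hbu⟩
    refine ⟨a * b, M.mul_mem ha hb, ?_, ?_⟩
    · rw [hφcong _ _ _ (hstable a ha b (hMF b hb)) rfl,
        hmul a b ha (hMF b hb)]
      exact mul_ne_zero hφa hφb
    · have : (a * b) * (m * u) = (a * m) * (b * u) := by ring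
      rw [this]
      exact hstable _ ham _ hbu
  · intro m u a ha hφa ham b hb hφb hbu c hc hφc hcmu
    have key : φ ⟨a, hMF a ha⟩ * φ ⟨b, hMF b hb⟩ * φ ⟨c * (m * u), hcmu⟩ =
        φ ⟨c, hMF c hc⟩ * (φ ⟨a * m, hMF _ ham⟩ * φ ⟨b * u, hbu⟩) := by
      have h1 : φ ⟨a * (b * (c * (m * u))), hstable a ha _
            (hstable b hb _ hcmu)⟩ =
          φ ⟨a, hMF a ha⟩ * (φ ⟨b, hMF b hb⟩ * φ ⟨c * (m * u), hcmu⟩) := by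
        rw [hmul a _ ha (hstable b hb _ hcmu), hmul b _ hb hcmu]
      have h2 : φ ⟨c * ((a * m) * (b * u)), hstable c hc _
            (hstable _ ham _ hbu)⟩ =
          φ ⟨c, hMF c hc⟩ * (φ ⟨a * m, hMF _ ham⟩ * φ ⟨b * u, hbu⟩) := by
        rw [hmul c _ hc (hstable _ ham _ hbu), hmul _ _ ham hbu]
      have heq : a * (b * (c * (m * u))) = c * ((a * m) * (b * u)) := by ring
      rw [← h2, mul_assoc, ← h1]
      exact hφcong _ _ _ _ heq
    rw [div_mul_div_comm, div_eq_div_iff hφc (mul_ne_zero hφa hφb)]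
    linear_combination key
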